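/- Let n ≥ 2 be an integer with n ≡ ±1 (mod 6) and w = max(ν_3(n-1), ν_3(n+1)) ≥ 1. Then for every m ≥ 3, ν_3( T_n^{(m)}(1) · 3^m / m! ) ≥ w + 2, where T_n^{(m)}(1)·3^m/m! is an integer times a power of 3 interpreted via the formula T_n^{(m)}(1) = ∏_{j=0}^{m-1} (n^2-j^2)/(2j+1). -/

import Mathlib

open Polynomial Polynomial.Chebyshev Finset

/-! ### Auxiliary lemmas -/

private lemma cheb_ode' (R : Type*) [CommRing R] (k : ℤ) :
    (1 - X ^ 2) * derivative (derivative (T R k)) =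
      X * derivative (T R k) - (k : R[X]) ^ 2 * T R k := by
  have h1 : derivative (T R k) = (k : R[X]) * U R (k - 1) := T_derivative_eq_U (R := R) k
  have h2 := add_one_mul_T_eq_poly_in_U (R := R) (k - 1)
  rw [sub_add_cancel] at h2
  have h3 : ((k - 1 : ℤ) : R[X]) + 1 = (k : R[X]) := by push_cast; ring
  rw [h3] at h2
  rw [h1, derivative_mul, derivative_intCast]
  linear_combination (k : R[X]) * h2

private lemma cheb_iter' (R : Type*) [CommRing R] (k : ℤ) : ∀ m : ℕ,
    (1 - X ^ 2) * derivative^[m + 2] (T R k) =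
      (2 * (m : R[X]) + 1) * (X * derivative^[m + 1] (T R k)) +
        ((m : R[X]) ^ 2 - (k : R[X]) ^ 2) * derivative^[m] (T R k)
  | 0 => by
    simp only [Nat.cast_zero, Function.iterate_succ_apply', Function.iterate_zero_apply,
      Function.iterate_one]
    rw [cheb_ode']
    ring
  | (m + 1) => by
    have h := congr_arg derivative (cheb_iter' R k m)
    simp only [derivative_mul, derivative_sub, derivative_add, derivative_one,
      derivative_X_pow, derivative_X, derivative_natCast, derivative_intCast, derivative_ofNat,
      derivative_pow, map_ofNat, Polynomial.C_eq_natCast, Nat.cast_ofNat,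
      ← Function.iterate_succ_apply'] at h ⊢
    push_cast
    push_cast at h
    linear_combination h

private lemma T_eval_one' (k : ℤ) : (T ℤ k).eval 1 = 1 := by
  induction k using Polynomial.Chebyshev.induct with
  | zero => simp [T_zero]
  | one => simp [T_one]
  | add_two n h1 h2 => rw [T_add_two]; simp [h1, h2]
  | neg_add_one n h1 h2 => rw [T_sub_one]; simp [T_neg] at h1; simp [h1, h2]

private lemma hd_eq' (n : ℕ) (m : ℕ) : ((derivative)^[m] (T ℚ n)).eval 1 =
    (m.factorial : ℚ) * (((Polynomial.hasseDeriv m (T ℤ n)).eval 1 : ℤ) : ℚ) := by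
  have h1 : (⇑derivative)^[m] (T ℚ n) = map (Int.castRingHom ℚ) ((⇑derivative)^[m] (T ℤ n)) := by
    rw [← map_T (Int.castRingHom ℚ) n, iterate_derivative_map]
  have h2 : (⇑derivative)^[m] (T ℤ (n:ℤ)) = m.factorial • Polynomial.hasseDeriv m (T ℤ n) := by
    rw [← Polynomial.factorial_smul_hasseDeriv]; rfl
  rw [h1, eval_one_map, h2]
  simp [mul_comm]

private lemma hc_rec' (n : ℕ) (m : ℕ) :
    ((m : ℤ) + 1) * (2 * m + 1) * ((Polynomial.hasseDeriv (m+1) (T ℤ n)).eval 1) =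
      ((n : ℤ) ^ 2 - (m : ℤ) ^ 2) * ((Polynomial.hasseDeriv m (T ℤ n)).eval 1) := by
  have h := congr_arg (eval (1 : ℚ)) (cheb_iter' ℚ n m)
  simp only [eval_mul, eval_add, eval_sub, eval_pow, eval_one, eval_X, eval_natCast,
    eval_intCast, eval_ofNat, hd_eq', Nat.factorial_succ] at h
  push_cast at h
  have hm : (m.factorial : ℚ) ≠ 0 := Nat.cast_ne_zero.2 m.factorial_ne_zero
  rw [← @Int.cast_inj ℚ]
  push_cast
  have h2 : ((m:ℚ)+1) * (2*m+1) * ((((Polynomial.hasseDeriv (m+1) (T ℤ n)).eval 1 : ℤ) : ℚ)) * (m.factorial : ℚ)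
      = ((n:ℚ)^2 - (m:ℚ)^2) * ((((Polynomial.hasseDeriv m (T ℤ n)).eval 1 : ℤ) : ℚ)) * (m.factorial : ℚ) := by
    linear_combination -h
  have := mul_right_cancel₀ hm h2
  linear_combination this

private lemma hprod' (n : ℕ) : ∀ m : ℕ,
    ((m.factorial : ℤ) * ∏ j ∈ range m, (2*(j:ℤ)+1)) * ((Polynomial.hasseDeriv m (T ℤ n)).eval 1)
      = ∏ j ∈ range m, ((n:ℤ)^2 - (j:ℤ)^2)
  | 0 => by simp [Polynomial.hasseDeriv_zero', T_eval_one']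
  | (m + 1) => by
    rw [prod_range_succ, prod_range_succ, Nat.factorial_succ]
    push_cast
    linear_combination ((n:ℤ)^2-(m:ℤ)^2) * hprod' n m +
      ((m.factorial:ℤ) * ∏ j ∈ range m, (2*(j:ℤ)+1)) * hc_rec' n m

private lemma val_fact' : ∀ k : ℕ, padicValNat 3 (k.factorial) = ∑ j ∈ range k, padicValNat 3 (j+1)
  | 0 => by simp
  | (k+1) => by
    rw [Nat.factorial_succ, padicValNat.mul (by omega) k.factorial_ne_zero, sum_range_succ,
      val_fact' k]
    ring

private lemma odd_prod' : ∀ m : ℕ, (∏ j ∈ range m, (2*j+1)) * (2^m * m.factorial) = (2*m).factorial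
  | 0 => by simp
  | (m+1) => by
    have h := odd_prod' m
    rw [prod_range_succ, Nat.factorial_succ, show 2*(m+1) = 2*m+1+1 by ring,
      Nat.factorial_succ, Nat.factorial_succ]
    ring_nf
    ring_nf at h
    rw [← h]
    ring

private noncomputable def Eaux (w : ℕ) (j : ℕ) : ℕ :=
  if j = 0 then 0 else if j = 1 then w else padicValNat 3 (j^2-1)

private lemma sum_E' (w m : ℕ) (hm : 2 ≤ m) :
    ∑ j ∈ range m, Eaux w j =
      w + padicValNat 3 ((m-2).factorial) + padicValNat 3 (m.factorial) := by
  have hsplit : range m = Finset.Ico 0 2 ∪ Finset.Ico 2 m := by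
    rw [range_eq_Ico, ← Finset.Ico_union_Ico_eq_Ico (by omega) hm]
  have hE2 : ∀ j ∈ Finset.Ico 2 m, Eaux w j = padicValNat 3 (j-1) + padicValNat 3 (j+1) := by
    intro j hj
    simp only [Finset.mem_Ico] at hj
    have h2 : 2 ≤ j := hj.1
    obtain ⟨k, rfl⟩ : ∃ k, j = k + 2 := ⟨j - 2, by omega⟩
    have hsq : (k+2)^2 = (k+1)*(k+3) + 1 := by ring
    have hsq2 : ((k+2)-1)*((k+2)+1) = (k+1)*(k+3) := by norm_num
    have : (k+2)^2 - 1 = ((k+2)-1)*((k+2)+1) := by omega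
    rw [Eaux, if_neg (by omega), if_neg (by omega), this,
      padicValNat.mul (by omega) (by omega)]
  rw [hsplit, Finset.sum_union (by
    simp [Finset.disjoint_left]; omega)]
  rw [Finset.sum_congr rfl hE2, Finset.sum_add_distrib]
  have e1 : ∑ j ∈ Finset.Ico 2 m, padicValNat 3 (j-1) = padicValNat 3 ((m-2).factorial) := by
    rw [Finset.sum_Ico_eq_sum_range, val_fact']
    apply Finset.sum_congr rfl
    intro i _
    congr 1
    omega
  have e2 : ∑ j ∈ Finset.Ico 2 m, padicValNat 3 (j+1) = padicValNat 3 (m.factorial) := by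
    rw [val_fact']
    have : range m = Finset.Ico 0 2 ∪ Finset.Ico 2 m := hsplit
    rw [this, Finset.sum_union (by simp [Finset.disjoint_left]; omega)]
    have h02 : ∑ j ∈ Finset.Ico 0 2, padicValNat 3 (j+1) = 0 := by
      rw [Finset.sum_Ico_eq_sum_range]
      norm_num [Finset.sum_range_succ]
    rw [h02, zero_add]
  have e0 : ∑ j ∈ Finset.Ico 0 2, Eaux w j = w := by
    rw [Finset.sum_Ico_eq_sum_range]
    norm_num [Finset.sum_range_succ, Eaux]
  omega

private lemma sq_lt' : ∀ w : ℕ, 1 ≤ w → w^2 < 3^w := by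
  intro w
  induction w with
  | zero => omega
  | succ w ih =>
    intro _
    rcases Nat.lt_or_ge w 1 with h | h
    · interval_cases w <;> norm_num
    · have h1 := ih h
      have h2 : 1 ≤ 3^w := Nat.one_le_pow _ _ (by norm_num)
      have e : (w+1)^2 = w^2 + 2*w + 1 := by ring
      rw [e, pow_succ 3 w]
      have hws : w ≤ w^2 := Nat.le_self_pow (by norm_num) w
      linarith

private lemma pow3' : ∀ k : ℕ, 2 ≤ k → 2*k+3 ≤ 3^k := by
  intro k
  induction k with
  | zero => omega
  | succ k ih =>
    intro h
    rcases Nat.lt_or_ge k 2 with h2 | h2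
    · interval_cases k <;> simp_all
    · have := ih h2
      have : 3^k ≥ 7 := by calc 3^k ≥ 2*k+3 := this
                                _ ≥ 7 := by omega
      rw [pow_succ]
      omega

private lemma logbound' (m : ℕ) (hm : 4 ≤ m) : Nat.log 3 (2*m) + Nat.log 3 m + 2 ≤ m := by
  rcases Nat.lt_or_ge m 6 with h6 | h6
  · interval_cases m
    · have h1 : Nat.log 3 (2*4) = 1 := Nat.log_eq_of_pow_le_of_lt_pow (by norm_num) (by norm_num)
      have h2 : Nat.log 3 4 = 1 := Nat.log_eq_of_pow_le_of_lt_pow (by norm_num) (by norm_num)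
      omega
    · have h1 : Nat.log 3 (2*5) = 2 := Nat.log_eq_of_pow_le_of_lt_pow (by norm_num) (by norm_num)
      have h2 : Nat.log 3 5 = 1 := Nat.log_eq_of_pow_le_of_lt_pow (by norm_num) (by norm_num)
      omega
  · have hm0 : m ≠ 0 := by omega
    have h1 : Nat.log 3 (2*m) ≤ Nat.log 3 m + 1 := by
      calc Nat.log 3 (2*m) ≤ Nat.log 3 (m*3) := Nat.log_mono_right (by omega)
        _ = Nat.log 3 m + 1 := Nat.log_mul_base (by norm_num) hm0
    set k := Nat.log 3 m with hk
    rcases Nat.lt_or_ge k 2 with h2 | h2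
    · omega
    · have h3 : 3^k ≤ m := Nat.pow_log_le_self 3 hm0
      have := pow3' k h2
      omega

private lemma val_le_log' (a : ℕ) (ha : a ≠ 0) : padicValNat 3 a ≤ Nat.log 3 a := by
  have h1 : 3 ^ padicValNat 3 a ≤ a := Nat.le_of_dvd (by omega) pow_padicValNat_dvd
  exact (Nat.le_log_iff_pow_le (by norm_num) ha).2 h1

private lemma comb' (m : ℕ) (hm : 3 ≤ m) :
    padicValNat 3 ((2*m).factorial) + 2 ≤
      padicValNat 3 ((m-2).factorial) + padicValNat 3 m.factorial + m := by
  have hchoose : (2*m).factorial = (2*m).choose m * m.factorial * m.factorial := by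
    have := Nat.choose_mul_factorial_mul_factorial (show m ≤ 2*m by omega)
    rw [show 2*m - m = m by omega] at this
    exact this.symm
  have hcpos : (2*m).choose m ≠ 0 := (Nat.choose_pos (by omega)).ne'
  have hf : m.factorial ≠ 0 := m.factorial_ne_zero
  have h1 : padicValNat 3 ((2*m).factorial) =
      padicValNat 3 ((2*m).choose m) + padicValNat 3 m.factorial + padicValNat 3 m.factorial := by
    rw [hchoose, padicValNat.mul (Nat.mul_ne_zero hcpos hf) hf, padicValNat.mul hcpos hf]
  have hmfact : m.factorial = m * ((m-1) * (m-2).factorial) := by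
    have e : m = (m-2) + 2 := by omega
    rw [e, Nat.factorial_succ, Nat.factorial_succ]
    congr 1 <;> omega
  have h2 : padicValNat 3 m.factorial =
      padicValNat 3 m + (padicValNat 3 (m-1) + padicValNat 3 ((m-2).factorial)) := by
    conv_lhs => rw [hmfact]
    rw [padicValNat.mul (by omega) (Nat.mul_ne_zero (by omega) (m-2).factorial_ne_zero),
      padicValNat.mul (by omega) (m-2).factorial_ne_zero]
  have hC : padicValNat 3 ((2*m).choose m) ≤ Nat.log 3 (2*m) := by
    have := Nat.factorization_choose_le_log (p := 3) (n := 2*m) (k := m)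
    rwa [Nat.factorization_def _ (by norm_num)] at this
  have hmm : padicValNat 3 (m-1) + padicValNat 3 m ≤ Nat.log 3 m := by
    by_cases h3 : 3 ∣ m
    · have hnd : ¬ (3 ∣ (m-1)) := by omega
      have : padicValNat 3 (m-1) = 0 := padicValNat.eq_zero_of_not_dvd hnd
      have := val_le_log' m (by omega)
      omega
    · have h0 : padicValNat 3 m = 0 := padicValNat.eq_zero_of_not_dvd h3
      have := val_le_log' (m-1) (by omega)
      have hlog : Nat.log 3 (m-1) ≤ Nat.log 3 m := Nat.log_mono_right (by omega)
      omega
  rcases Nat.lt_or_ge m 4 with h4 | h4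
  · have hm3 : m = 3 := by omega
    subst hm3
    have hc : (2*3).choose 3 = 20 := by decide
    have hcv : padicValNat 3 ((2*3).choose 3) = 0 := by
      rw [hc]; exact padicValNat.eq_zero_of_not_dvd (by omega)
    have h31 : padicValNat 3 (3-1) = 0 := padicValNat.eq_zero_of_not_dvd (by omega)
    have h33 : padicValNat 3 3 ≤ 1 := by
      have hl := val_le_log' 3 (by omega)
      have : Nat.log 3 3 = 1 := Nat.log_eq_of_pow_le_of_lt_pow (by norm_num) (by norm_num)
      omega
    omega
  · have := logbound' m h4
    omega

private lemma key_dvd' (n w : ℕ) (hw3 : (3:ℤ)^w ∣ (n:ℤ)^2 - 1) (hw1 : 1 ≤ w)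
    (m : ℕ) (hm : 3 ≤ m) (hmw : m ≤ w + 1) :
    (3:ℤ)^(w + 2 - m) ∣ (Polynomial.hasseDeriv m (T ℤ n)).eval 1 := by
  haveI : Fact (Nat.Prime 3) := ⟨by norm_num⟩
  set c : ℤ := (Polynomial.hasseDeriv m (T ℤ n)).eval 1 with hc
  by_cases hc0 : c = 0
  · simp [hc0]
  have hEdvd : ∀ j ∈ range m, (3:ℤ)^(Eaux w j) ∣ ((n:ℤ)^2 - (j:ℤ)^2) := by
    intro j hj
    simp only [mem_range] at hj
    rcases Nat.eq_zero_or_pos j with rfl | hj0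
    · simp [Eaux]
    rcases Nat.eq_or_lt_of_le hj0 with h1 | h1
    · obtain rfl := h1.symm
      rw [Eaux, if_neg (by omega), if_pos (by omega)]
      simpa using hw3
    · have h2 : 2 ≤ j := h1
      rw [Eaux, if_neg (by omega), if_neg (by omega)]
      set v := padicValNat 3 (j^2-1) with hv
      have hjw : j ≤ w := by omega
      have hj4 : 4 ≤ j^2 := by rw [pow_two]; exact Nat.mul_le_mul h2 h2
      have hd1 : (3:ℕ)^v ∣ j^2 - 1 := pow_padicValNat_dvd
      have hle : (3:ℕ)^v ≤ j^2 - 1 := Nat.le_of_dvd (by omega) hd1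
      have hlt : j^2 - 1 < 3^w := by
        have : j^2 ≤ w^2 := Nat.pow_le_pow_left hjw 2
        have := sq_lt' w hw1
        omega
      have hvw : v ≤ w := by
        have : (3:ℕ)^v < 3^w := by omega
        exact Nat.le_of_lt ((Nat.pow_lt_pow_iff_right (by norm_num)).1 this)
      have hdZ : (3:ℤ)^v ∣ (j:ℤ)^2 - 1 := by
        have := Int.natCast_dvd_natCast.2 hd1
        push_cast at this
        rwa [Nat.cast_sub (by omega)] at this
      have : (3:ℤ)^v ∣ ((n:ℤ)^2 - 1) - ((j:ℤ)^2 - 1) :=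
        dvd_sub (dvd_trans (pow_dvd_pow 3 hvw) hw3) hdZ
      simpa using this
  have hproddvd : (3:ℤ)^(∑ j ∈ range m, Eaux w j) ∣ ∏ j ∈ range m, ((n:ℤ)^2-(j:ℤ)^2) := by
    rw [← Finset.prod_pow_eq_pow_sum]
    exact Finset.prod_dvd_prod_of_dvd _ _ hEdvd
  set D : ℕ := m.factorial * ∏ j ∈ range m, (2*j+1) with hD
  have hDcast : ((D:ℤ)) = (m.factorial : ℤ) * ∏ j ∈ range m, (2*(j:ℤ)+1) := by
    push_cast [hD]
    ring
  have hdvdDc : (3:ℤ)^(∑ j ∈ range m, Eaux w j) ∣ (D:ℤ) * c := by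
    rw [hDcast, hprod' n m]
    exact hproddvd
  have hodd_ne : (∏ j ∈ range m, (2*j+1)) ≠ 0 := by
    apply Finset.prod_ne_zero_iff.2
    intro j _
    omega
  have hD_ne : D ≠ 0 := Nat.mul_ne_zero m.factorial_ne_zero hodd_ne
  have hvD : padicValNat 3 D = padicValNat 3 ((2*m).factorial) := by
    have h1 : padicValNat 3 D = padicValNat 3 m.factorial + padicValNat 3 (∏ j ∈ range m, (2*j+1)) :=
      padicValNat.mul m.factorial_ne_zero hodd_ne
    have h2 : padicValNat 3 (∏ j ∈ range m, (2*j+1)) + padicValNat 3 (2^m * m.factorial)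
        = padicValNat 3 ((2*m).factorial) := by
      rw [← padicValNat.mul hodd_ne (Nat.mul_ne_zero (by positivity) m.factorial_ne_zero),
        odd_prod' m]
    have h3 : padicValNat 3 (2^m * m.factorial) = padicValNat 3 m.factorial := by
      rw [padicValNat.mul (by positivity) m.factorial_ne_zero,
        padicValNat.eq_zero_of_not_dvd (by
          intro h
          have := Nat.Prime.dvd_of_dvd_pow Nat.prime_three h
          omega)]
      omega
    rw [h1, ← h2, h3]
    ring
  have hDc_ne : (D:ℤ) * c ≠ 0 := mul_ne_zero (Int.natCast_ne_zero.2 hD_ne) hc0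
  have hval : (∑ j ∈ range m, Eaux w j) ≤ padicValInt 3 ((D:ℤ) * c) := by
    rcases (padicValInt_dvd_iff _ _).1 hdvdDc with h | h
    · exact absurd h hDc_ne
    · exact h
  rw [padicValInt.mul (Int.natCast_ne_zero.2 hD_ne) hc0, padicValInt.of_nat] at hval
  rw [sum_E' w m (by omega)] at hval
  have hcomb := comb' m hm
  have hfinal : w + 2 - m ≤ padicValInt 3 c := by omega
  have h := (padicValInt_dvd_iff (w + 2 - m) c).2 (Or.inr hfinal)
  exact_mod_cast h

/-- Let `n ≥ 2` with `n ≡ ±1 (mod 6)` and `w = max (ν₃ (n - 1)) (ν₃ (n + 1)) ≥ 1`. Then for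
every `m ≥ 3`, `ν₃ (T_n^{(m)}(1) * 3 ^ m / m!) ≥ w + 2` (with the convention that the claim
also holds when the quantity vanishes). -/
theorem padicValRat_chebyshev_taylor_coeff (n : ℕ) (hn : 2 ≤ n)
    (hmod : n % 6 = 1 ∨ n % 6 = 5)
    (w : ℕ) (hw : w = max (padicValNat 3 (n - 1)) (padicValNat 3 (n + 1))) (hw1 : 1 ≤ w) :
    ∀ m : ℕ, 3 ≤ m →
      ((Polynomial.derivative)^[m] (T ℚ n)).eval 1 * 3 ^ m / (m.factorial : ℚ) = 0 ∨
      (w + 2 : ℤ) ≤ padicValRat 3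
        (((Polynomial.derivative)^[m] (T ℚ n)).eval 1 * 3 ^ m / (m.factorial : ℚ)) := by
  haveI : Fact (Nat.Prime 3) := ⟨by norm_num⟩
  -- 3^w divides n^2 - 1
  have hw3 : (3:ℤ)^w ∣ (n:ℤ)^2 - 1 := by
    have hfac : (n:ℤ)^2 - 1 = ((n:ℤ) - 1) * ((n:ℤ) + 1) := by ring
    rcases le_total (padicValNat 3 (n-1)) (padicValNat 3 (n+1)) with h | h
    · have hwq : w = padicValNat 3 (n+1) := by rw [hw, max_eq_right h]
      have hd : (3:ℕ)^w ∣ n + 1 := by rw [hwq]; exact pow_padicValNat_dvd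
      have : (3:ℤ)^w ∣ (n:ℤ) + 1 := by exact_mod_cast Int.natCast_dvd_natCast.2 hd
      rw [hfac]
      exact Dvd.dvd.mul_left this _
    · have hwq : w = padicValNat 3 (n-1) := by rw [hw, max_eq_left h]
      have hd : (3:ℕ)^w ∣ n - 1 := by rw [hwq]; exact pow_padicValNat_dvd
      have : (3:ℤ)^w ∣ (n:ℤ) - 1 := by
        have := Int.natCast_dvd_natCast.2 hd
        push_cast at this
        rwa [Nat.cast_sub (by omega)] at this
      rw [hfac]
      exact Dvd.dvd.mul_right this _
  intro m hm
  set c : ℤ := (Polynomial.hasseDeriv m (T ℤ n)).eval 1 with hcdef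
  have hexpr : ((Polynomial.derivative)^[m] (T ℚ n)).eval 1 * 3 ^ m / (m.factorial : ℚ)
      = ((c * 3^m : ℤ) : ℚ) := by
    rw [hd_eq' n m]
    have hmf : (m.factorial : ℚ) ≠ 0 := Nat.cast_ne_zero.2 m.factorial_ne_zero
    field_simp
    push_cast
    ring
  by_cases hc0 : c = 0
  · left
    rw [hexpr, hc0]
    norm_num
  · right
    rw [hexpr, padicValRat.of_int]
    have h3m : ((3:ℤ)^m) ≠ 0 := by positivity
    rw [padicValInt.mul hc0 h3m]
    have hpowval : padicValInt 3 ((3:ℤ)^m) = m := by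
      rw [show ((3:ℤ)^m) = (((3^m : ℕ)) : ℤ) by push_cast; ring, padicValInt.of_nat,
        padicValNat.prime_pow]
    rw [hpowval]
    rcases le_or_gt m (w+1) with hcase | hcase
    · have hdvd := key_dvd' n w hw3 hw1 m hm hcase
      have hile : w + 2 - m ≤ padicValInt 3 c := by
        rcases (padicValInt_dvd_iff (w + 2 - m) c).1 (by exact_mod_cast hdvd) with h | h
        · exact absurd h hc0
        · exact h
      push_cast
      omega
    · push_cast
      omega
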